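/- Let p be a positive integer, let V₁, V₂ be real orthogonal p×p matrices (V_iᵀV_i = I), let D₁, D₂ be invertible diagonal real p×p matrices, and set Ω = D₁⁻¹V₁ᵀV₂D₂ and S = V₁D₁²V₁ᵀ + V₂D₂²V₂ᵀ. Then S is positive definite (hence invertible), and D₁V₁ᵀ S⁻¹ V₁D₁ = (I + ΩΩᵀ)⁻¹ and D₂V₂ᵀ S⁻¹ V₂D₂ = (I + Ω⁻¹(Ω⁻¹)ᵀ)⁻¹. -/

import Mathlib

open Matrix

private lemma posDef_conj_aux {n : Type*} [Fintype n] [DecidableEq n]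
    {A B : Matrix n n ℝ} (hA : A.PosDef) (hB : IsUnit B) : (B * A * Bᵀ).PosDef := by
  refine Matrix.PosDef.of_dotProduct_mulVec_pos ?_ fun x hx => ?_
  · have := (hA.posSemidef.mul_mul_conjTranspose_same B).isHermitian
    simpa using this
  · have hBT : IsUnit Bᵀ := (Matrix.isUnit_transpose _).2 hB
    have hxin : Bᵀ *ᵥ x ≠ 0 := by
      intro h
      exact hx ((Matrix.mulVec_injective_iff_isUnit.2 hBT).eq_iff' (by simp)|>.1 h)
    have := hA.dotProduct_mulVec_pos hxin
    convert this using 1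
    simp only [star_trivial]
    rw [← Matrix.mulVec_mulVec, ← Matrix.mulVec_mulVec, Matrix.dotProduct_mulVec,
      ← Matrix.mulVec_transpose]

private lemma conj_inv_aux {n : Type*} [Fintype n] [DecidableEq n]
    (B C : Matrix n n ℝ) (hB : IsUnit B) :
    Bᵀ * (B * C * Bᵀ)⁻¹ * B = C⁻¹ := by
  have hBT : IsUnit Bᵀ := (Matrix.isUnit_transpose _).2 hB
  rw [Matrix.mul_inv_rev, Matrix.mul_inv_rev, ← Matrix.mul_assoc, ← Matrix.mul_assoc,
    Matrix.mul_nonsing_inv _ ((Matrix.isUnit_iff_isUnit_det _).1 hBT),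
    Matrix.one_mul, Matrix.mul_assoc,
    Matrix.nonsing_inv_mul _ ((Matrix.isUnit_iff_isUnit_det _).1 hB), Matrix.mul_one]

/-- The first and second matrix identities in the proof of Proposition 1:
with `Ω = D₁⁻¹V₁ᵀV₂D₂` and `S = V₁D₁²V₁ᵀ + V₂D₂²V₂ᵀ`, the matrix `S` is positive
definite and `D₁V₁ᵀ S⁻¹ V₁D₁ = (I + ΩΩᵀ)⁻¹`, `D₂V₂ᵀ S⁻¹ V₂D₂ = (I + Ω⁻¹(Ω⁻¹)ᵀ)⁻¹`. -/
theorem svd_schur_identities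
    (p : ℕ) (hp : 0 < p)
    (V₁ V₂ : Matrix (Fin p) (Fin p) ℝ)
    (hV₁ : V₁ᵀ * V₁ = 1) (hV₂ : V₂ᵀ * V₂ = 1)
    (d₁ d₂ : Fin p → ℝ) (hd₁ : ∀ i, d₁ i ≠ 0) (hd₂ : ∀ i, d₂ i ≠ 0) :
    let D₁ := Matrix.diagonal d₁
    let D₂ := Matrix.diagonal d₂
    let Ωm := D₁⁻¹ * V₁ᵀ * V₂ * D₂
    let S := V₁ * D₁ ^ 2 * V₁ᵀ + V₂ * D₂ ^ 2 * V₂ᵀ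
    S.PosDef ∧
      D₁ * V₁ᵀ * S⁻¹ * (V₁ * D₁) = (1 + Ωm * Ωmᵀ)⁻¹ ∧
      D₂ * V₂ᵀ * S⁻¹ * (V₂ * D₂) = (1 + Ωm⁻¹ * (Ωm⁻¹)ᵀ)⁻¹ := by
  intro D₁ D₂ Ωm S
  -- basic unit facts
  have hD₁u : IsUnit D₁ := by
    refine (Matrix.isUnit_iff_isUnit_det _).2 ?_
    rw [Matrix.det_diagonal]
    exact (Finset.prod_ne_zero_iff.2 fun i _ => hd₁ i).isUnit
  have hD₂u : IsUnit D₂ := by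
    refine (Matrix.isUnit_iff_isUnit_det _).2 ?_
    rw [Matrix.det_diagonal]
    exact (Finset.prod_ne_zero_iff.2 fun i _ => hd₂ i).isUnit
  have hV₁u : IsUnit V₁ :=
    (Matrix.isUnit_iff_isUnit_det _).2 (Matrix.isUnit_det_of_left_inverse hV₁)
  have hV₂u : IsUnit V₂ :=
    (Matrix.isUnit_iff_isUnit_det _).2 (Matrix.isUnit_det_of_left_inverse hV₂)
  set B₁ := V₁ * D₁ with hB₁def
  set B₂ := V₂ * D₂ with hB₂def
  have hB₁ : IsUnit B₁ := hV₁u.mul hD₁u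
  have hB₂ : IsUnit B₂ := hV₂u.mul hD₂u
  have hB₁T : B₁ᵀ = D₁ * V₁ᵀ := by rw [hB₁def, Matrix.transpose_mul, Matrix.diagonal_transpose]
  have hB₂T : B₂ᵀ = D₂ * V₂ᵀ := by rw [hB₂def, Matrix.transpose_mul, Matrix.diagonal_transpose]
  have hB₁inv : B₁⁻¹ = D₁⁻¹ * V₁ᵀ := by
    rw [hB₁def, Matrix.mul_inv_rev, Matrix.inv_eq_left_inv hV₁]
  have hB₂inv : B₂⁻¹ = D₂⁻¹ * V₂ᵀ := by
    rw [hB₂def, Matrix.mul_inv_rev, Matrix.inv_eq_left_inv hV₂]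
  have hΩ : Ωm = B₁⁻¹ * B₂ := by
    rw [hB₁inv]; simp only [Ωm, hB₂def, Matrix.mul_assoc]
  have hΩu : IsUnit Ωm := by rw [hΩ]; exact (Matrix.isUnit_nonsing_inv_iff.2 hB₁).mul hB₂
  have hΩinv : Ωm⁻¹ = B₂⁻¹ * B₁ := by
    rw [hΩ, Matrix.mul_inv_rev, Matrix.nonsing_inv_nonsing_inv _
      ((Matrix.isUnit_iff_isUnit_det _).1 hB₁)]
  have hB₁Ω : B₁ * Ωm = B₂ := by
    rw [hΩ, ← Matrix.mul_assoc, Matrix.mul_nonsing_inv _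
      ((Matrix.isUnit_iff_isUnit_det _).1 hB₁), Matrix.one_mul]
  have hB₂Ω : B₂ * Ωm⁻¹ = B₁ := by
    rw [hΩinv, ← Matrix.mul_assoc, Matrix.mul_nonsing_inv _
      ((Matrix.isUnit_iff_isUnit_det _).1 hB₂), Matrix.one_mul]
  have hS1 : S = B₁ * B₁ᵀ + B₂ * B₂ᵀ := by
    rw [hB₁T, hB₂T]
    simp only [S, hB₁T, hB₂T, hB₁def, hB₂def, sq, Matrix.mul_assoc]
  have hC₁ := Matrix.PosDef.one.add_posSemidef
    (show (Ωm * Ωmᵀ).PosSemidef by simpa using Matrix.posSemidef_self_mul_conjTranspose Ωm)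
  have hC₂ := Matrix.PosDef.one.add_posSemidef
    (show (Ωm⁻¹ * (Ωm⁻¹)ᵀ).PosSemidef by
      simpa using Matrix.posSemidef_self_mul_conjTranspose Ωm⁻¹)
  have e₁ : B₁ * (1 + Ωm * Ωmᵀ) * B₁ᵀ = B₁ * B₁ᵀ + (B₁ * Ωm) * (B₁ * Ωm)ᵀ := by
    rw [Matrix.mul_add, Matrix.mul_one, Matrix.add_mul]
    simp only [Matrix.transpose_mul, Matrix.mul_assoc]
  have e₂ : B₂ * (1 + Ωm⁻¹ * (Ωm⁻¹)ᵀ) * B₂ᵀ = B₂ * B₂ᵀ + (B₂ * Ωm⁻¹) * (B₂ * Ωm⁻¹)ᵀ := by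
    rw [Matrix.mul_add, Matrix.mul_one, Matrix.add_mul]
    simp only [Matrix.transpose_mul, Matrix.mul_assoc]
  have hSdec₁ : S = B₁ * (1 + Ωm * Ωmᵀ) * B₁ᵀ := by
    rw [hS1, e₁, hB₁Ω]
  have hSdec₂ : S = B₂ * (1 + Ωm⁻¹ * (Ωm⁻¹)ᵀ) * B₂ᵀ := by
    rw [hS1, e₂, hB₂Ω, add_comm]
  refine ⟨hSdec₁ ▸ posDef_conj_aux hC₁ hB₁, ?_, ?_⟩
  · rw [← hB₁T, hSdec₁]
    exact conj_inv_aux _ _ hB₁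
  · rw [← hB₂T, hSdec₂]
    exact conj_inv_aux _ _ hB₂
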